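/- Bijectivity of monotone piecewise cubic Hermite transformations: let x₀ < x₁ < … < x_M be real nodes with strictly increasing values y₀ < y₁ < … < y_M and slopes d₀, …, d_M ≥ 0, and set Δ_i = (y_{i+1} − y_i)/(x_{i+1} − x_i). If for every i the Fritsch–Carlson condition d_i ≤ 3Δ_i and d_{i+1} ≤ 3Δ_i holds on [x_i, x_{i+1}], then the piecewise cubic Hermite interpolant H is strictly increasing on [x₀, x_M] and is a bijection from [x₀, x_M] onto [y₀, y_M]. -/

import Mathlib

open Polynomial Set

lemma cubic_eval (p : ℝ[X]) (h : p.natDegree ≤ 3) (t : ℝ) :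
    p.eval t = p.coeff 0 + p.coeff 1 * t + p.coeff 2 * t^2 + p.coeff 3 * t^3 := by
  rw [Polynomial.eval_eq_sum_range' (lt_of_le_of_lt h (by norm_num : (3:ℕ) < 4))]
  simp [Finset.sum_range_succ]

lemma cubic_deriv_eval (p : ℝ[X]) (h : p.natDegree ≤ 3) (t : ℝ) :
    p.derivative.eval t = p.coeff 1 + 2 * p.coeff 2 * t + 3 * p.coeff 3 * t^2 := by
  have h2 : (derivative p).natDegree < 3 :=
    lt_of_le_of_lt (Polynomial.natDegree_derivative_le p) (by omega)
  rw [Polynomial.eval_eq_sum_range' h2]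
  simp [Finset.sum_range_succ, Polynomial.coeff_derivative]
  ring

lemma key_ineq (a b t ya yb da db c1 c2 c3 : ℝ)
    (hab : a < b) (hy : ya < yb)
    (F1 : c1 + 2*c2*a + 3*c3*a^2 = da)
    (F2 : c1 + 2*c2*b + 3*c3*b^2 = db)
    (F3 : c1*(b-a) + c2*(b^2-a^2) + c3*(b^3-a^3) = yb - ya)
    (hda0 : 0 ≤ da) (hdb0 : 0 ≤ db)
    (hda3 : da * (b-a) ≤ 3*(yb-ya)) (hdb3 : db * (b-a) ≤ 3*(yb-ya))
    (ht1 : a ≤ t) (ht2 : t ≤ b) :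
    0 ≤ c1 + 2*c2*t + 3*c3*t^2 := by
  have key : (b-a)^3 * (c1 + 2*c2*t + 3*c3*t^2)
      = 6*(t-a)*(b-t)*(yb-ya) + (b-a)*da*(b-t)*(b+2*a-3*t)
        + (b-a)*db*(t-a)*(3*t-2*b-a) := by
    linear_combination ((b-a)*(b-t)*(b+2*a-3*t)) * F1
      + ((b-a)*(t-a)*(3*t-2*b-a)) * F2 + (6*(t-a)*(b-t)) * F3
  have h3 : (0:ℝ) < (b-a)^3 := pow_pos (sub_pos.2 hab) 3
  rw [← mul_nonneg_iff_of_pos_left h3, key]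
  have hu : 0 ≤ t - a := sub_nonneg.2 ht1
  have hv : 0 ≤ b - t := sub_nonneg.2 ht2
  have hD : (0:ℝ) ≤ yb - ya := by linarith
  have hba : (0:ℝ) ≤ b - a := by linarith
  rcases le_total 0 (b+2*a-3*t) with h1 | h1 <;> rcases le_total 0 (3*t-2*b-a) with h2 | h2
  · linarith [mul_nonneg (mul_nonneg (mul_nonneg hba hda0) hv) h1,
      mul_nonneg (mul_nonneg (mul_nonneg hba hdb0) hu) h2,
      mul_nonneg (mul_nonneg hu hv) hD]
  · linarith [mul_nonneg (mul_nonneg (mul_nonneg hba hda0) hv) h1,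
      mul_nonneg (sub_nonneg.2 hdb3) (mul_nonneg hu (by linarith : (0:ℝ) ≤ 2*b+a-3*t)),
      mul_nonneg hD (sq_nonneg (t-a))]
  · linarith [mul_nonneg (mul_nonneg (mul_nonneg hba hdb0) hu) h2,
      mul_nonneg (sub_nonneg.2 hda3) (mul_nonneg hv (by linarith : (0:ℝ) ≤ 3*t-b-2*a)),
      mul_nonneg hD (sq_nonneg (b-t))]
  · linarith [mul_nonneg (sub_nonneg.2 hda3) (mul_nonneg hv (by linarith : (0:ℝ) ≤ 3*t-b-2*a)),
      mul_nonneg (sub_nonneg.2 hdb3) (mul_nonneg hu (by linarith : (0:ℝ) ≤ 2*b+a-3*t)),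
      mul_nonneg hD (sq_nonneg (2*t-a-b))]

lemma piece_strictMono (p : ℝ[X]) (a b ya yb da db : ℝ) (hab : a < b) (hy : ya < yb)
    (hdeg : p.degree ≤ 3)
    (hva : p.eval a = ya) (hvb : p.eval b = yb)
    (hda : p.derivative.eval a = da) (hdb : p.derivative.eval b = db)
    (hda0 : 0 ≤ da) (hdb0 : 0 ≤ db)
    (hda3 : da ≤ 3 * ((yb - ya) / (b - a))) (hdb3 : db ≤ 3 * ((yb - ya) / (b - a))) :
    StrictMonoOn (fun t => p.eval t) (Icc a b) := by
  have hba : (0:ℝ) < b - a := sub_pos.2 hab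
  have hnd : p.natDegree ≤ 3 := Polynomial.natDegree_le_iff_degree_le.2 hdeg
  have hda3' : da * (b - a) ≤ 3 * (yb - ya) := by
    rw [← mul_div_assoc] at hda3
    exact (le_div_iff₀ hba).1 hda3
  have hdb3' : db * (b - a) ≤ 3 * (yb - ya) := by
    rw [← mul_div_assoc] at hdb3
    exact (le_div_iff₀ hba).1 hdb3
  have F1 : p.coeff 1 + 2 * p.coeff 2 * a + 3 * p.coeff 3 * a ^ 2 = da := by
    rw [← cubic_deriv_eval p hnd]; exact hda
  have F2 : p.coeff 1 + 2 * p.coeff 2 * b + 3 * p.coeff 3 * b ^ 2 = db := by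
    rw [← cubic_deriv_eval p hnd]; exact hdb
  have ea := cubic_eval p hnd a
  have eb := cubic_eval p hnd b
  rw [hva] at ea; rw [hvb] at eb
  have F3 : p.coeff 1 * (b - a) + p.coeff 2 * (b ^ 2 - a ^ 2) + p.coeff 3 * (b ^ 3 - a ^ 3)
      = yb - ya := by linarith [ea, eb]
  have hderiv : ∀ t ∈ Icc a b, 0 ≤ p.derivative.eval t := by
    intro t ht
    rw [cubic_deriv_eval p hnd]
    exact key_ineq a b t ya yb da db _ _ _ hab hy F1 F2 F3 hda0 hdb0 hda3' hdb3' ht.1 ht.2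
  have hmono : MonotoneOn (fun t => p.eval t) (Icc a b) := by
    apply monotoneOn_of_deriv_nonneg (convex_Icc a b) (p.continuous.continuousOn)
    · exact fun t _ => (p.differentiable t).differentiableWithinAt
    · intro t ht
      rw [Polynomial.deriv]
      rw [interior_Icc] at ht
      exact hderiv t ⟨ht.1.le, ht.2.le⟩
  intro s hs t ht hst
  refine lt_of_le_of_ne (hmono hs ht hst.le) fun heq : p.eval s = p.eval t => ?_
  have hconst : ∀ r ∈ Icc s t, p.eval r = p.eval s := by
    intro r hr
    have hrm : r ∈ Icc a b := ⟨hs.1.trans hr.1, hr.2.trans ht.2⟩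
    exact le_antisymm (heq ▸ hmono hrm ht hr.2) (hmono hs hrm hr.1)
  have hpc : p = C (p.eval s) := by
    apply Polynomial.eq_of_infinite_eval_eq
    apply (Set.Icc_infinite hst).mono
    intro r hr
    simp only [Set.mem_setOf_eq, eval_C]
    exact hconst r hr
  have h1 : p.eval a = p.eval s := by conv_lhs => rw [hpc, eval_C]
  have h2 : p.eval b = p.eval s := by conv_lhs => rw [hpc, eval_C]
  rw [hva] at h1; rw [hvb] at h2
  linarith

/-- Bijectivity of monotone piecewise cubic Hermite transformations: with strictly
increasing nodes `x` and values `y`, nonnegative slopes `d` satisfying the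
Fritsch–Carlson condition `d i ≤ 3 Δ i` and `d (i+1) ≤ 3 Δ i` on every subinterval,
the piecewise cubic Hermite interpolant `H` is strictly increasing on `[x 0, x M]`
and a bijection from `[x 0, x M]` onto `[y 0, y M]`. -/
theorem pchip_bijOn (M : ℕ) (hM : 0 < M) (x y d : Fin (M + 1) → ℝ)
    (hx : StrictMono x) (hy : StrictMono y) (hd : ∀ i, 0 ≤ d i)
    (Hs : Fin M → Polynomial ℝ)
    (hdeg : ∀ i, (Hs i).degree ≤ 3)
    (hv₀ : ∀ i : Fin M, (Hs i).eval (x i.castSucc) = y i.castSucc)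
    (hv₁ : ∀ i : Fin M, (Hs i).eval (x i.succ) = y i.succ)
    (hd₀ : ∀ i : Fin M, (Hs i).derivative.eval (x i.castSucc) = d i.castSucc)
    (hd₁ : ∀ i : Fin M, (Hs i).derivative.eval (x i.succ) = d i.succ)
    (hFC : ∀ i : Fin M,
      d i.castSucc ≤ 3 * ((y i.succ - y i.castSucc) / (x i.succ - x i.castSucc)) ∧
      d i.succ ≤ 3 * ((y i.succ - y i.castSucc) / (x i.succ - x i.castSucc)))
    (H : ℝ → ℝ)
    (hH : ∀ i : Fin M, ∀ t ∈ Set.Icc (x i.castSucc) (x i.succ), H t = (Hs i).eval t) :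
    StrictMonoOn H (Set.Icc (x 0) (x (Fin.last M))) ∧
      Set.BijOn H (Set.Icc (x 0) (x (Fin.last M)))
        (Set.Icc (y 0) (y (Fin.last M))) := by
  have hxM : ∀ i : Fin M, x i.castSucc < x i.succ := fun i => hx (Fin.castSucc_lt_succ (i := i))
  have hyM : ∀ i : Fin M, y i.castSucc < y i.succ := fun i => hy (Fin.castSucc_lt_succ (i := i))
  have pieceSM : ∀ i : Fin M,
      StrictMonoOn (fun t => (Hs i).eval t) (Icc (x i.castSucc) (x i.succ)) := fun i =>
    piece_strictMono (Hs i) _ _ _ _ _ _ (hxM i) (hyM i) (hdeg i) (hv₀ i) (hv₁ i)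
      (hd₀ i) (hd₁ i) (hd _) (hd _) (hFC i).1 (hFC i).2
  have pieceH : ∀ i : Fin M, StrictMonoOn H (Icc (x i.castSucc) (x i.succ)) := by
    intro i s hs t ht hst
    rw [hH i s hs, hH i t ht]
    exact pieceSM i hs ht hst
  have pieceMaps : ∀ i : Fin M,
      Set.MapsTo H (Icc (x i.castSucc) (x i.succ)) (Icc (y i.castSucc) (y i.succ)) := by
    intro i s hs
    rw [hH i s hs]
    constructor
    · rw [← hv₀ i]
      exact (pieceSM i).monotoneOn (left_mem_Icc.2 (hxM i).le) hs hs.1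
    · rw [← hv₁ i]
      exact (pieceSM i).monotoneOn hs (right_mem_Icc.2 (hxM i).le) hs.2
  have pieceSurj : ∀ i : Fin M,
      Set.SurjOn H (Icc (x i.castSucc) (x i.succ)) (Icc (y i.castSucc) (y i.succ)) := by
    intro i
    have key := intermediate_value_Icc (hxM i).le (Hs i).continuous.continuousOn
    rw [hv₀ i, hv₁ i] at key
    intro z hz
    rcases key hz with ⟨s, hs, hsz⟩
    exact ⟨s, hs, (hH i s hs).trans hsz⟩
  have main : ∀ n, (hn : n ≤ M) →
      StrictMonoOn H (Icc (x 0) (x ⟨n, by omega⟩)) ∧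
      Set.MapsTo H (Icc (x 0) (x ⟨n, by omega⟩)) (Icc (y 0) (y ⟨n, by omega⟩)) ∧
      Set.SurjOn H (Icc (x 0) (x ⟨n, by omega⟩)) (Icc (y 0) (y ⟨n, by omega⟩)) := by
    intro n
    induction n with
    | zero =>
      intro _
      have h0 : (⟨0, by omega⟩ : Fin (M + 1)) = 0 := by ext; simp
      rw [h0]
      have hc : ((⟨0, hM⟩ : Fin M)).castSucc = 0 := by ext; simp
      have hx0 : H (x 0) = y 0 := by
        have hmem : x ((⟨0, hM⟩ : Fin M)).castSucc ∈
            Icc (x ((⟨0, hM⟩ : Fin M)).castSucc) (x ((⟨0, hM⟩ : Fin M)).succ) :=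
          left_mem_Icc.2 (hxM _).le
        have h := (hH ⟨0, hM⟩ _ hmem).trans (hv₀ ⟨0, hM⟩)
        rwa [hc] at h
      rw [Set.Icc_self, Set.Icc_self]
      refine ⟨?_, ?_, ?_⟩
      · intro s hs t ht hst
        rw [Set.mem_singleton_iff] at hs ht
        exact absurd (hs.trans ht.symm) hst.ne
      · intro s hs
        rw [Set.mem_singleton_iff] at hs
        rw [hs, hx0]
        exact Set.mem_singleton _
      · intro z hz
        rw [Set.mem_singleton_iff] at hz
        exact ⟨x 0, Set.mem_singleton _, hx0.trans hz.symm⟩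
    | succ n ih =>
      intro hn1
      obtain ⟨SM, MT, SJ⟩ := ih (by omega)
      have hnM : n < M := by omega
      have hic : ((⟨n, hnM⟩ : Fin M)).castSucc = (⟨n, by omega⟩ : Fin (M + 1)) := by ext; simp
      have his : ((⟨n, hnM⟩ : Fin M)).succ = (⟨n + 1, by omega⟩ : Fin (M + 1)) := by ext; simp
      have P1 := pieceH ⟨n, hnM⟩
      have P2 := pieceMaps ⟨n, hnM⟩
      have P3 := pieceSurj ⟨n, hnM⟩
      rw [hic, his] at P1 P2 P3
      have hxmid : x 0 ≤ x ⟨n, by omega⟩ := hx.monotone (by simp [Fin.le_def])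
      have hxstep : x (⟨n, by omega⟩ : Fin (M + 1)) ≤ x ⟨n + 1, by omega⟩ :=
        (hx (by simp [Fin.lt_def])).le
      have hymid : y 0 ≤ y ⟨n, by omega⟩ := hy.monotone (by simp [Fin.le_def])
      have hystep : y (⟨n, by omega⟩ : Fin (M + 1)) ≤ y ⟨n + 1, by omega⟩ :=
        (hy (by simp [Fin.lt_def])).le
      have hU : Icc (x 0) (x ⟨n + 1, by omega⟩)
          = Icc (x 0) (x ⟨n, by omega⟩) ∪ Icc (x ⟨n, by omega⟩) (x ⟨n + 1, by omega⟩) :=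
        (Set.Icc_union_Icc_eq_Icc hxmid hxstep).symm
      have hUy : Icc (y 0) (y ⟨n + 1, by omega⟩)
          = Icc (y 0) (y ⟨n, by omega⟩) ∪ Icc (y ⟨n, by omega⟩) (y ⟨n + 1, by omega⟩) :=
        (Set.Icc_union_Icc_eq_Icc hymid hystep).symm
      refine ⟨?_, ?_, ?_⟩
      · rw [hU]
        exact SM.union P1 ⟨right_mem_Icc.2 hxmid, fun r hr => hr.2⟩
          ⟨left_mem_Icc.2 hxstep, fun r hr => hr.1⟩
      · rw [hU]
        intro s hs
        rcases hs with hs | hs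
        · exact Set.Icc_subset_Icc_right hystep (MT hs)
        · exact Set.Icc_subset_Icc_left hymid (P2 hs)
      · rw [hU, hUy]
        intro z hz
        rcases hz with hz | hz
        · exact Set.image_mono (f := H) Set.subset_union_left (SJ hz)
        · exact Set.image_mono (f := H) Set.subset_union_right (P3 hz)
  obtain ⟨SM, MT, SJ⟩ := main M le_rfl
  have hlast : (Fin.last M) = (⟨M, by omega⟩ : Fin (M + 1)) := rfl
  rw [hlast]
  exact ⟨SM, MT, SM.injOn, SJ⟩
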